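/- For any positive reals p, q in (0,1), the KL divergence between Bernoulli(p) and Bernoulli(q), defined as q*log(q/p) + (1-q)*log((1-q)/(1-p)), is at most |p - q|^2 / min{p, q, 1-p, 1-q}. -/

import Mathlib

open Real Set

lemma aux_A {t : ℝ} (ht : 1 ≤ t) : 2 * t * Real.log t ≤ t ^ 2 - 1 := by
  have key : ∀ x : ℝ, 0 < x → HasDerivAt (fun y : ℝ => y ^ 2 - 1 - 2 * y * Real.log y)
      (2 * x - (2 * Real.log x + 2)) x := by
    intro x hx
    have h1 : HasDerivAt (fun y : ℝ => y ^ 2 - 1) (2 * x) x := by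
      simpa using ((hasDerivAt_pow 2 x).sub_const 1)
    have h2 : HasDerivAt (fun y : ℝ => 2 * y * Real.log y) (2 * Real.log x + 2) x := by
      have := ((hasDerivAt_id x).const_mul 2).mul (Real.hasDerivAt_log hx.ne')
      exact this.congr_deriv (by simp [id, hx.ne'])
    exact h1.sub h2
  have mono : MonotoneOn (fun y : ℝ => y ^ 2 - 1 - 2 * y * Real.log y) (Set.Ici 1) := by
    apply monotoneOn_of_deriv_nonneg (convex_Ici 1)
    · intro x hx
      exact ((key x (lt_of_lt_of_le one_pos hx)).continuousAt).continuousWithinAt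
    · intro x hx
      rw [interior_Ici] at hx
      exact ((key x (lt_trans one_pos hx)).differentiableAt).differentiableWithinAt
    · intro x hx
      rw [interior_Ici] at hx
      rw [(key x (lt_trans one_pos hx)).deriv]
      have := Real.log_le_sub_one_of_pos (lt_trans one_pos hx)
      nlinarith
  have h0 := mono (self_mem_Ici) (mem_Ici.mpr ht) ht
  simp at h0
  nlinarith

lemma aux_B {t : ℝ} (ht : 1 ≤ t) : (t - 1) - (t - 1) ^ 2 / 2 ≤ Real.log t := by
  have key : ∀ x : ℝ, 0 < x → HasDerivAt (fun y : ℝ => Real.log y - (y - 1) + (y - 1) ^ 2 / 2)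
      (1 / x - 1 + (x - 1)) x := by
    intro x hx
    have h1 : HasDerivAt (fun y : ℝ => Real.log y - (y - 1)) (1 / x - 1) x := by
      rw [one_div]
      exact (Real.hasDerivAt_log hx.ne').sub ((hasDerivAt_id x).sub_const 1)
    have h2 : HasDerivAt (fun y : ℝ => (y - 1) ^ 2 / 2) (x - 1) x := by
      have := (((hasDerivAt_id x).sub_const 1).pow 2).div_const 2
      exact this.congr_deriv (by simp [id])
    exact h1.add h2
  have mono : MonotoneOn (fun y : ℝ => Real.log y - (y - 1) + (y - 1) ^ 2 / 2) (Set.Ici 1) := by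
    apply monotoneOn_of_deriv_nonneg (convex_Ici 1)
    · intro x hx
      exact ((key x (lt_of_lt_of_le one_pos hx)).continuousAt).continuousWithinAt
    · intro x hx
      rw [interior_Ici] at hx
      exact ((key x (lt_trans one_pos hx)).differentiableAt).differentiableWithinAt
    · intro x hx
      rw [interior_Ici] at hx
      rw [(key x (lt_trans one_pos hx)).deriv]
      have hx0 : (0:ℝ) < x := lt_trans one_pos hx
      have heq : 1 / x - 1 + (x - 1) = (x - 1)^2 / x := by field_simp; ring
      rw [heq]
      positivity

  have h0 := mono (self_mem_Ici) (mem_Ici.mpr ht) ht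
  simp at h0
  nlinarith

lemma aux_key (a b : ℝ) (ha : 0 < a) (hb : 0 < b) :
    a * Real.log (a / b) ≤ (a - b) + (a - b) ^ 2 / (2 * min a b) := by
  rcases le_total b a with h | h
  · rw [min_eq_right h]
    have ht : 1 ≤ a / b := (one_le_div hb).mpr h
    have key1 := aux_A ht
    have h2 : a * Real.log (a / b) ≤ (a ^ 2 - b ^ 2) / (2 * b) := by
      rw [le_div_iff₀ (by positivity : (0:ℝ) < 2 * b)]
      have h3 := mul_le_mul_of_nonneg_left key1 (sq_nonneg b)
      calc a * Real.log (a / b) * (2 * b) = b ^ 2 * (2 * (a / b) * Real.log (a / b)) := by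
            field_simp
        _ ≤ b ^ 2 * ((a / b) ^ 2 - 1) := h3
        _ = a ^ 2 - b ^ 2 := by field_simp
    have e : (a ^ 2 - b ^ 2) / (2 * b) = (a - b) + (a - b) ^ 2 / (2 * b) := by
      field_simp; ring
    linarith [e ▸ h2]
  · rw [min_eq_left h]
    have ht : 1 ≤ b / a := (one_le_div ha).mpr h
    have key1 := aux_B ht
    have e1 : Real.log (a / b) = -Real.log (b / a) := by
      rw [← Real.log_inv, inv_div]
    calc a * Real.log (a / b) = -(a * Real.log (b / a)) := by rw [e1]; ring
      _ ≤ -(a * ((b / a - 1) - (b / a - 1) ^ 2 / 2)) := by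
          exact neg_le_neg (mul_le_mul_of_nonneg_left key1 ha.le)
      _ = (a - b) + (a - b) ^ 2 / (2 * a) := by field_simp; ring

/-- KL divergence bound between Bernoulli distributions (paper's convention):
`D_KL(Ber(p) ‖ Ber(q)) = q log(q/p) + (1-q) log((1-q)/(1-p)) ≤ |p-q|² / min{p,q,1-p,1-q}`. -/
theorem bernoulli_kl_le (p q : ℝ) (hp0 : 0 < p) (hp1 : p < 1) (hq0 : 0 < q) (hq1 : q < 1) :
    q * Real.log (q / p) + (1 - q) * Real.log ((1 - q) / (1 - p)) ≤
      |p - q| ^ 2 / min (min p q) (min (1 - p) (1 - q)) := by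
  set m := min (min p q) (min (1 - p) (1 - q)) with hm
  have hm0 : 0 < m := by
    apply lt_min (lt_min hp0 hq0) (lt_min (by linarith) (by linarith))
  have h1 := aux_key q p hq0 hp0
  have h2 := aux_key (1 - q) (1 - p) (by linarith) (by linarith)
  have e2 : (1 - q) - (1 - p) = p - q := by ring
  have hmin1 : m ≤ min q p := le_trans (min_le_left _ _) (by rw [min_comm])
  have hmin2 : m ≤ min (1 - q) (1 - p) := le_trans (min_le_right _ _) (by rw [min_comm])
  have hb1 : (q - p) ^ 2 / (2 * min q p) ≤ (q - p) ^ 2 / (2 * m) := by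
    gcongr
  have hb2 : ((1 - q) - (1 - p)) ^ 2 / (2 * min (1 - q) (1 - p)) ≤ (q - p) ^ 2 / (2 * m) := by
    rw [e2]
    have : (p - q) ^ 2 = (q - p) ^ 2 := by ring
    rw [this]
    gcongr
  have efin : (q - p) ^ 2 / (2 * m) + (q - p) ^ 2 / (2 * m) = |p - q| ^ 2 / m := by
    rw [sq_abs]
    field_simp
    ring
  calc q * Real.log (q / p) + (1 - q) * Real.log ((1 - q) / (1 - p))
      ≤ ((q - p) + (q - p) ^ 2 / (2 * min q p))
        + (((1 - q) - (1 - p)) + ((1 - q) - (1 - p)) ^ 2 / (2 * min (1 - q) (1 - p))) := by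
        linarith
    _ ≤ (q - p) ^ 2 / (2 * m) + (q - p) ^ 2 / (2 * m) := by
        have : (q - p) + ((1 - q) - (1 - p)) = 0 := by ring
        linarith [hb1, hb2]
    _ = |p - q| ^ 2 / m := efin
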